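/- Let a and b be real numbers with 0 < a < b. Then 17b² − 4ab − 4a² > 0, and the quadratic equation z² + b·z + (ab + a² − 4b²) = 0 has exactly one real root z satisfying z > b, namely z = ( √(17b² − 4ab − 4a²) − b ) / 2. -/
import Mathlib


/-- For `0 < a < b` one has `17b² - 4ab - 4a² > 0`, and the
quadratic `z² + bz + (ab + a² - 4b²) = 0` has exactly one real root with
`z > b`, namely `z = (√(17b² - 4ab - 4a²) - b)/2`. -/
theorem stmt13 (a b : ℝ) (ha : 0 < a) (hab : a < b) :
    0 < 17 * b ^ 2 - 4 * a * b - 4 * a ^ 2 ∧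
    (∀ z : ℝ,
      (b < z ∧ z ^ 2 + b * z + (a * b + a ^ 2 - 4 * b ^ 2) = 0) ↔
        z = (Real.sqrt (17 * b ^ 2 - 4 * a * b - 4 * a ^ 2) - b) / 2) := by
  have hb : 0 < b := ha.trans hab
  have hD : 0 < 17 * b ^ 2 - 4 * a * b - 4 * a ^ 2 := by nlinarith
  set s := Real.sqrt (17 * b ^ 2 - 4 * a * b - 4 * a ^ 2) with hs
  have hs2 : s ^ 2 = 17 * b ^ 2 - 4 * a * b - 4 * a ^ 2 := Real.sq_sqrt hD.le
  have hsnn : 0 ≤ s := Real.sqrt_nonneg _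
  have hs3 : 3 * b < s := by nlinarith
  refine ⟨hD, fun z => ⟨?_, ?_⟩⟩
  · rintro ⟨hz, heq⟩
    have hfac : (z - (s - b) / 2) * (z - (-s - b) / 2) = 0 := by
      linear_combination heq - (1/4 : ℝ) * hs2
    rcases mul_eq_zero.1 hfac with h | h
    · linarith [sub_eq_zero.1 h]
    · have := sub_eq_zero.1 h
      nlinarith
  · rintro rfl
    constructor
    · linarith
    · linear_combination (1/4 : ℝ) * hs2
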